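/- arXiv:1510.01868 — 2 statements merged into one kernel-verified Lean document; each statement's English description precedes it below -/
import Mathlib

section
/- Let S be a subsemigroup of the partition monoid P_n, and let x ∈ P_n. Then the map λ: P_n → Proj(P_n) defined by (x)λ = x* x is a homomorphism from the right-multiplication action of S on P_n to the right action of S on projections given by p · y = y* p y, and the kernel of λ is Green's L-relation of P_n. Moreover, if L is any L-class of P_n and x ∈ L, then the stabiliser group S_L (maps induced on L by {s ∈ S^1 : Ls = L}) acts faithfully on the set of transverse blocks of x* x. -/
/-- The underlying set `{1,…,n} ∪ {−1,…,−n}` of points of the partition monoid: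
`Sum.inl i` is the positive point `i + 1`, `Sum.inr i` is the negative point `−(i + 1)`. -/
abbrev PBase (n : ℕ) := Fin n ⊕ Fin n

/-- Elements of the partition monoid `P_n`: set partitions of
`{1,…,n} ∪ {−1,…,−n}`, encoded as equivalence relations (setoids). -/
abbrev PartitionMonoid (n : ℕ) := Setoid (PBase n)

namespace PartitionMonoid

variable {n : ℕ}

/-- Three copies of `{1,…,n}`, used to define the product of two partitions. -/
abbrev Tri (n : ℕ) := Fin n ⊕ (Fin n ⊕ Fin n)

/-- Embedding of the points of the left factor `x` into the three layers:
positive points to the top layer, negative points to the middle layer. -/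
def ix : PBase n → Tri n := Sum.elim Sum.inl (fun i => Sum.inr (Sum.inl i))

/-- Embedding of the points of the right factor `y` into the three layers:
positive points to the middle layer, negative points to the bottom layer. -/
def iy : PBase n → Tri n := Sum.elim (fun i => Sum.inr (Sum.inl i)) (fun i => Sum.inr (Sum.inr i))

/-- Embedding of the points of the product into the three layers:
positive points to the top layer, negative points to the bottom layer. -/
def iz : PBase n → Tri n := Sum.elim Sum.inl (fun i => Sum.inr (Sum.inr i))

/-- The relation on the three layers generated by the blocks of `x` (on the top
two layers) and the blocks of `y` (on the bottom two layers). -/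
def prodBase (x y : PartitionMonoid n) (u v : Tri n) : Prop :=
  (∃ p q, ix p = u ∧ ix q = v ∧ x.r p q) ∨ (∃ p q, iy p = u ∧ iy q = v ∧ y.r p q)

/-- The product of two partitions: two points of the product are in the same
block iff they are connected in the graph obtained by glueing the negative
points of `x` to the positive points of `y`. -/
instance : Mul (PartitionMonoid n) :=
  ⟨fun x y =>
    { r := fun p q => Relation.EqvGen (prodBase x y) (iz p) (iz q)
      iseqv :=
        ⟨fun p => Relation.EqvGen.refl _,
         fun h => Relation.EqvGen.symm _ _ h,
         fun h h' => Relation.EqvGen.trans _ _ _ h h'⟩ }⟩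

/-- The involution `x ↦ x*` of the partition monoid, swapping `i` and `−i` in
every block. -/
instance : Star (PartitionMonoid n) := ⟨fun x => Setoid.comap Sum.swap x⟩

/-- Green's L-relation on `P_n`: `x L y` iff `P_n^1 x = P_n^1 y`. -/
def pL (x y : PartitionMonoid n) : Prop :=
  (x = y ∨ ∃ a, a * x = y) ∧ (y = x ∨ ∃ a, a * y = x)

/-- Green's R-relation on `P_n`: `x R y` iff `x P_n^1 = y P_n^1`. -/
def pR (x y : PartitionMonoid n) : Prop :=
  (x = y ∨ ∃ a, x * a = y) ∧ (y = x ∨ ∃ a, y * a = x)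

end PartitionMonoid

namespace PartitionMonoid

variable {n : ℕ}

/-- The right action of `S^1` (identity adjoined) on `P_n`. -/
def act1 (S : Subsemigroup (PartitionMonoid n)) (u : PartitionMonoid n)
    (o : Option ↥S) : PartitionMonoid n :=
  o.elim u (fun s => u * (s : PartitionMonoid n))

/-- The stabiliser of a set `L ⊆ P_n` under the right action of `S^1` on
subsets of `P_n`. -/
def stab (S : Subsemigroup (PartitionMonoid n)) (L : Set (PartitionMonoid n)) :
    Set (Option ↥S) :=
  {o | (fun y => act1 S y o) '' L = L}

/-- A positive point `k` lies in a transverse block of the projection `x* x`. -/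
def transversePoint (x : PartitionMonoid n) (k : Fin n) : Prop :=
  ∃ j : Fin n, (star x * x).r (Sum.inl k) (Sum.inr j)

end PartitionMonoid

section Tools

variable {α : Type*} {β : Type*}

open Relation

lemma eqvGen_le {r : α → α → Prop} {s : Setoid α} (h : ∀ u v, r u v → s.r u v)
    {a b : α} (hab : Relation.EqvGen r a b) : s.r a b := by
  induction hab with
  | rel u v huv => exact h u v huv
  | refl u => exact s.refl' u
  | symm u v _ ih => exact s.symm' ih
  | trans u v w _ _ ih1 ih2 => exact s.trans' ih1 ih2

lemma eqvGen_map {r : α → α → Prop} {r' : β → β → Prop} (f : α → β)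
    (h : ∀ u v, r u v → Relation.EqvGen r' (f u) (f v)) {a b : α}
    (hab : Relation.EqvGen r a b) : Relation.EqvGen r' (f a) (f b) := by
  induction hab with
  | rel u v huv => exact h u v huv
  | refl u => exact .refl _
  | symm u v _ ih => exact .symm _ _ ih
  | trans u v w _ _ ih1 ih2 => exact .trans _ _ _ ih1 ih2

/-- Pushforward of a setoid along an injection. -/
def spush (f : α → β) (hf : Function.Injective f) (s : Setoid α) : Setoid β where
  r u v := u = v ∨ ∃ p q, f p = u ∧ f q = v ∧ s.r p q
  iseqv := by
    refine ⟨fun u => Or.inl rfl, ?_, ?_⟩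
    · rintro u v (rfl | ⟨p, q, rfl, rfl, h⟩)
      · exact Or.inl rfl
      · exact Or.inr ⟨q, p, rfl, rfl, s.symm' h⟩
    · rintro u v w (rfl | ⟨p, q, rfl, rfl, h⟩) h2
      · exact h2
      · rcases h2 with rfl | ⟨p', q', hp', rfl, h'⟩
        · exact Or.inr ⟨p, q, rfl, rfl, h⟩
        · exact Or.inr ⟨p, q', rfl, rfl, s.trans' h (by rwa [hf hp'] at h')⟩

lemma emb_eqvGen {r : α → α → Prop} {r' : β → β → Prop} (f : α → β) (hf : Function.Injective f)
    (hgen : ∀ u v, r u v → r' (f u) (f v))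
    (hgen' : ∀ u v, r' u v → ∃ p q, f p = u ∧ f q = v ∧ Relation.EqvGen r p q)
    (a b : α) : Relation.EqvGen r a b ↔ Relation.EqvGen r' (f a) (f b) := by
  constructor
  · exact eqvGen_map f fun u v huv => Relation.EqvGen.rel _ _ (hgen u v huv)
  · intro h
    have h2 := eqvGen_le (s := spush f hf (Relation.EqvGen.setoid r))
      (fun u v huv => Or.inr (hgen' u v huv)) h
    rcases h2 with h' | ⟨p, q, hp, hq, hpq⟩
    · exact hf h' ▸ Relation.EqvGen.refl _
    · rw [← hf hp, ← hf hq]; exact hpq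

/-- Restriction of a setoid to a set (extended by the diagonal). -/
def srestrict (s : Setoid α) (A : Set α) : Setoid α where
  r u v := u = v ∨ (u ∈ A ∧ v ∈ A ∧ s.r u v)
  iseqv := by
    refine ⟨fun u => Or.inl rfl, ?_, ?_⟩
    · rintro u v (rfl | ⟨hu, hv, h⟩)
      · exact Or.inl rfl
      · exact Or.inr ⟨hv, hu, s.symm' h⟩
    · rintro u v w (rfl | ⟨hu, hv, h⟩) h2
      · exact h2
      · rcases h2 with rfl | ⟨hv', hw, h'⟩
        · exact Or.inr ⟨hu, hv, h⟩
        · exact Or.inr ⟨hu, hw, s.trans' h h'⟩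

lemma sup_chains (u z : Setoid α) {a b : α} :
    Relation.EqvGen (fun p q => u.r p q ∨ z.r p q) a b ↔
      Relation.ReflTransGen (fun p q => ∃ c, u.r p c ∧ z.r c q) a b := by
  have hsymm : ∀ {a b : α}, Relation.ReflTransGen (fun p q => ∃ c, u.r p c ∧ z.r c q) a b →
      Relation.ReflTransGen (fun p q => ∃ c, u.r p c ∧ z.r c q) b a := by
    intro a b h
    induction h with
    | refl => exact .refl
    | @tail m w h1 h2 ih =>
      rcases h2 with ⟨c, hc1, hc2⟩
      refine Relation.ReflTransGen.trans ?_ ih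
      have s1 : Relation.ReflTransGen (fun p q => ∃ c, u.r p c ∧ z.r c q) w c :=
        Relation.ReflTransGen.single ⟨w, u.refl' w, z.symm' hc2⟩
      have s2 : Relation.ReflTransGen (fun p q => ∃ c, u.r p c ∧ z.r c q) c m :=
        Relation.ReflTransGen.single ⟨m, u.symm' hc1, z.refl' m⟩
      exact s1.trans s2
  constructor
  · intro h
    induction h with
    | rel p q hpq =>
      rcases hpq with h | h
      · exact Relation.ReflTransGen.single ⟨q, h, z.refl' q⟩
      · exact Relation.ReflTransGen.single ⟨p, u.refl' p, h⟩
    | refl p => exact .refl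
    | symm p q _ ih => exact hsymm ih
    | trans p q r _ _ ih1 ih2 => exact ih1.trans ih2
  · intro h
    induction h with
    | refl => exact .refl _
    | @tail m w h1 h2 ih =>
      rcases h2 with ⟨c, hc1, hc2⟩
      exact Relation.EqvGen.trans _ _ _ (Relation.EqvGen.trans _ _ _ ih (.rel _ _ (Or.inl hc1)))
        (.rel _ _ (Or.inr hc2))

lemma glue (u z : Setoid α) (A : Set α)
    (hz : ∀ a b, z.r a b → a = b ∨ (a ∈ A ∧ b ∈ A)) {a b : α} (ha : a ∈ A) (hb : b ∈ A)
    (h : Relation.EqvGen (fun p q => u.r p q ∨ z.r p q) a b) :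
    Relation.EqvGen (fun p q => (srestrict u A).r p q ∨ z.r p q) a b := by
  rw [sup_chains] at h
  have inv : ∀ d, Relation.ReflTransGen (fun p q => ∃ c, u.r p c ∧ z.r c q) a d →
      ∃ c, c ∈ A ∧ Relation.EqvGen (fun p q => (srestrict u A).r p q ∨ z.r p q) a c ∧ u.r c d := by
    intro d hd
    induction hd with
    | refl => exact ⟨a, ha, .refl a, u.refl' a⟩
    | @tail m w h1 h2 ih =>
      rcases ih with ⟨c, hcA, hac, hcm⟩
      rcases h2 with ⟨c1, hmc1, hc1w⟩
      have hcc1 : u.r c c1 := u.trans' hcm hmc1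
      rcases hz _ _ hc1w with rfl | ⟨hc1A, hwA⟩
      · exact ⟨c, hcA, hac, hcc1⟩
      · refine ⟨w, hwA, ?_, u.refl' w⟩
        exact Relation.EqvGen.trans _ _ _
          (Relation.EqvGen.trans _ _ _ hac (.rel _ _ (Or.inl (Or.inr ⟨hcA, hc1A, hcc1⟩))))
          (.rel _ _ (Or.inr hc1w))
  rcases inv b h with ⟨c, hcA, hac, hcb⟩
  exact Relation.EqvGen.trans _ _ _ hac (.rel _ _ (Or.inl (Or.inr ⟨hcA, hb, hcb⟩)))

lemma eqvGen_iff_rtg {r : α → α → Prop} (hs : ∀ a b, r a b → r b a) (a b : α) :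
    Relation.EqvGen r a b ↔ Relation.ReflTransGen r a b := by
  have hsymm : ∀ {a b : α}, Relation.ReflTransGen r a b → Relation.ReflTransGen r b a := by
    intro a b h
    induction h with
    | refl => exact .refl
    | tail h1 h2 ih => exact Relation.ReflTransGen.head (hs _ _ h2) ih
  constructor
  · intro h
    induction h with
    | rel p q hpq => exact Relation.ReflTransGen.single hpq
    | refl p => exact .refl
    | symm p q _ ih => exact hsymm ih
    | trans p q s _ _ ih1 ih2 => exact ih1.trans ih2
  · intro h
    induction h with
    | refl => exact .refl _
    | tail h1 h2 ih => exact Relation.EqvGen.trans _ _ _ ih (.rel _ _ h2)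

end Tools



namespace PartitionMonoid

variable {n : ℕ}

/-- chains on the middle layer -/
def Mr (x y : PartitionMonoid n) : Fin n → Fin n → Prop :=
  Relation.EqvGen (fun u v => x.r (Sum.inr u) (Sum.inr v) ∨ y.r (Sum.inl u) (Sum.inl v))

lemma Mr.refl (x y : PartitionMonoid n) (m : Fin n) : Mr x y m m := Relation.EqvGen.refl m
lemma Mr.symm {x y : PartitionMonoid n} {m m' : Fin n} (h : Mr x y m m') : Mr x y m' m :=
  Relation.EqvGen.symm _ _ h
lemma Mr.trans {x y : PartitionMonoid n} {m₁ m₂ m₃ : Fin n} (h : Mr x y m₁ m₂)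
    (h' : Mr x y m₂ m₃) : Mr x y m₁ m₃ := Relation.EqvGen.trans _ _ _ h h'
lemma Mr.of_x {x y : PartitionMonoid n} {m m' : Fin n} (h : x.r (Sum.inr m) (Sum.inr m')) :
    Mr x y m m' := .rel _ _ (Or.inl h)
lemma Mr.of_y {x y : PartitionMonoid n} {m m' : Fin n} (h : y.r (Sum.inl m) (Sum.inl m')) :
    Mr x y m m' := .rel _ _ (Or.inr h)

def RR (x y : PartitionMonoid n) : Tri n → Tri n → Prop
  | .inl a, .inl b => x.r (.inl a) (.inl b) ∨
      ∃ m m', x.r (.inl a) (.inr m) ∧ Mr x y m m' ∧ x.r (.inl b) (.inr m')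
  | .inl a, .inr (.inl m0) => ∃ m, x.r (.inl a) (.inr m) ∧ Mr x y m m0
  | .inl a, .inr (.inr b) => ∃ m m', x.r (.inl a) (.inr m) ∧ Mr x y m m' ∧ y.r (.inl m') (.inr b)
  | .inr (.inl m0), .inl b => ∃ m, x.r (.inl b) (.inr m) ∧ Mr x y m m0
  | .inr (.inl m0), .inr (.inl m1) => Mr x y m0 m1
  | .inr (.inl m0), .inr (.inr b) => ∃ m', Mr x y m0 m' ∧ y.r (.inl m') (.inr b)
  | .inr (.inr a), .inl b => ∃ m m', x.r (.inl b) (.inr m) ∧ Mr x y m m' ∧ y.r (.inl m') (.inr a)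
  | .inr (.inr a), .inr (.inl m1) => ∃ m', Mr x y m1 m' ∧ y.r (.inl m') (.inr a)
  | .inr (.inr a), .inr (.inr b) => y.r (.inr a) (.inr b) ∨
      ∃ m m', y.r (.inl m) (.inr a) ∧ Mr x y m m' ∧ y.r (.inl m') (.inr b)

lemma RR_refl (x y : PartitionMonoid n) (u : Tri n) : RR x y u u := by
  rcases u with a | m | b
  · exact Or.inl (x.refl' _)
  · exact Mr.refl x y m
  · exact Or.inl (y.refl' _)

lemma RR_app_x {x y : PartitionMonoid n} {u : Tri n} {p q : PBase n}
    (h : RR x y u (ix p)) (hx : x.r p q) : RR x y u (ix q) := by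
  rcases u with a | m0 | c <;> rcases p with b | m1 <;> rcases q with b' | m2 <;>
    simp only [ix, Sum.elim_inl, Sum.elim_inr] at h ⊢
  · rcases h with h | ⟨m, m', h1, hM, h2⟩
    · exact Or.inl (x.trans' h hx)
    · exact Or.inr ⟨m, m', h1, hM, x.trans' (x.symm' hx) h2⟩
  · rcases h with h | ⟨m, m', h1, hM, h2⟩
    · exact ⟨m2, x.trans' h hx, Mr.refl x y m2⟩
    · exact ⟨m, h1, hM.trans (Mr.of_x (x.trans' (x.symm' h2) hx))⟩
  · rcases h with ⟨m, h1, hM⟩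
    exact Or.inr ⟨m, m1, h1, hM, x.symm' hx⟩
  · rcases h with ⟨m, h1, hM⟩
    exact ⟨m, h1, hM.trans (Mr.of_x hx)⟩
  · rcases h with ⟨m, h1, hM⟩
    exact ⟨m, x.trans' (x.symm' hx) h1, hM⟩
  · rcases h with ⟨m, h1, hM⟩
    exact hM.symm.trans (Mr.of_x (x.trans' (x.symm' h1) hx))
  · exact ⟨m1, x.symm' hx, h.symm⟩
  · exact h.trans (Mr.of_x hx)
  · rcases h with ⟨m, m', h1, hM, h2⟩
    exact ⟨m, m', x.trans' (x.symm' hx) h1, hM, h2⟩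
  · rcases h with ⟨m, m', h1, hM, h2⟩
    exact ⟨m', (Mr.of_x (x.trans' (x.symm' hx) h1)).trans hM, h2⟩
  · rcases h with ⟨m', hM, h2⟩
    exact ⟨m1, m', x.symm' hx, hM, h2⟩
  · rcases h with ⟨m', hM, h2⟩
    exact ⟨m', (Mr.of_x (x.symm' hx)).trans hM, h2⟩

lemma RR_app_y {x y : PartitionMonoid n} {u : Tri n} {p q : PBase n}
    (h : RR x y u (iy p)) (hy : y.r p q) : RR x y u (iy q) := by
  rcases u with a | m0 | c <;> rcases p with m1 | b <;> rcases q with m2 | b' <;>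
    simp only [iy, Sum.elim_inl, Sum.elim_inr] at h ⊢
  · rcases h with ⟨m, h1, hM⟩
    exact ⟨m, h1, hM.trans (Mr.of_y hy)⟩
  · rcases h with ⟨m, h1, hM⟩
    exact ⟨m, m1, h1, hM, hy⟩
  · rcases h with ⟨m, m', h1, hM, h2⟩
    exact ⟨m, h1, hM.trans (Mr.of_y (y.trans' h2 hy))⟩
  · rcases h with ⟨m, m', h1, hM, h2⟩
    exact ⟨m, m', h1, hM, y.trans' h2 hy⟩
  · exact h.trans (Mr.of_y hy)
  · exact ⟨m1, h, hy⟩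
  · rcases h with ⟨m', hM, h2⟩
    exact hM.trans (Mr.of_y (y.trans' h2 hy))
  · rcases h with ⟨m', hM, h2⟩
    exact ⟨m', hM, y.trans' h2 hy⟩
  · rcases h with ⟨m', hM, h2⟩
    exact ⟨m', (Mr.of_y (y.symm' hy)).trans hM, h2⟩
  · rcases h with ⟨m', hM, h2⟩
    exact Or.inr ⟨m', m1, h2, hM.symm, hy⟩
  · rcases h with h | ⟨m, m', h1, hM, h2⟩
    · exact ⟨m2, Mr.refl x y m2, y.trans' (y.symm' hy) (y.symm' h)⟩
    · exact ⟨m, (hM.trans (Mr.of_y (y.trans' h2 hy))).symm, h1⟩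
  · rcases h with h | ⟨m, m', h1, hM, h2⟩
    · exact Or.inl (y.trans' h hy)
    · exact Or.inr ⟨m, m', h1, hM, y.trans' h2 hy⟩

lemma prodBase_symm {x y : PartitionMonoid n} {u v : Tri n} (h : prodBase x y u v) :
    prodBase x y v u := by
  rcases h with ⟨p, q, hp, hq, h⟩ | ⟨p, q, hp, hq, h⟩
  · exact Or.inl ⟨q, p, hq, hp, x.symm' h⟩
  · exact Or.inr ⟨q, p, hq, hp, y.symm' h⟩

lemma S_to_RR {x y : PartitionMonoid n} {u v : Tri n}
    (h : Relation.EqvGen (prodBase x y) u v) : RR x y u v := by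
  rw [eqvGen_iff_rtg (fun _ _ => prodBase_symm)] at h
  induction h with
  | refl => exact RR_refl x y u
  | tail h1 h2 ih =>
    rcases h2 with ⟨p, q, rfl, rfl, hpq⟩ | ⟨p, q, rfl, rfl, hpq⟩
    · exact RR_app_x ih hpq
    · exact RR_app_y ih hpq

lemma Sx {x y : PartitionMonoid n} {p q : PBase n} (h : x.r p q) :
    Relation.EqvGen (prodBase x y) (ix p) (ix q) := .rel _ _ (Or.inl ⟨p, q, rfl, rfl, h⟩)

lemma Sy {x y : PartitionMonoid n} {p q : PBase n} (h : y.r p q) :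
    Relation.EqvGen (prodBase x y) (iy p) (iy q) := .rel _ _ (Or.inr ⟨p, q, rfl, rfl, h⟩)

lemma SM {x y : PartitionMonoid n} {m m' : Fin n} (h : Mr x y m m') :
    Relation.EqvGen (prodBase x y) (Sum.inr (Sum.inl m)) (Sum.inr (Sum.inl m')) := by
  refine eqvGen_map (fun m => (Sum.inr (Sum.inl m) : Tri n)) ?_ h
  rintro a b (hab | hab)
  · exact Sx (x := x) (y := y) (p := Sum.inr a) (q := Sum.inr b) hab
  · exact Sy (x := x) (y := y) (p := Sum.inl a) (q := Sum.inl b) hab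

lemma RR_to_S {x y : PartitionMonoid n} {u v : Tri n} (h : RR x y u v) :
    Relation.EqvGen (prodBase x y) u v := by
  have T : ∀ {a b c : Tri n}, Relation.EqvGen (prodBase x y) a b →
      Relation.EqvGen (prodBase x y) b c → Relation.EqvGen (prodBase x y) a c :=
    fun h1 h2 => .trans _ _ _ h1 h2
  have Sg : ∀ {a b : Tri n}, Relation.EqvGen (prodBase x y) a b →
      Relation.EqvGen (prodBase x y) b a := fun h1 => .symm _ _ h1
  rcases u with a | m0 | c <;> rcases v with b | m1 | b'
  · rcases h with h | ⟨m, m', h1, hM, h2⟩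
    · exact Sx (p := Sum.inl a) (q := Sum.inl b) h
    · exact T (T (Sx (p := Sum.inl a) (q := Sum.inr m) h1) (SM hM))
        (Sg (Sx (p := Sum.inl b) (q := Sum.inr m') h2))
  · rcases h with ⟨m, h1, hM⟩
    exact T (Sx (p := Sum.inl a) (q := Sum.inr m) h1) (SM hM)
  · rcases h with ⟨m, m', h1, hM, h2⟩
    exact T (T (Sx (p := Sum.inl a) (q := Sum.inr m) h1) (SM hM))
      (Sy (p := Sum.inl m') (q := Sum.inr b') h2)
  · rcases h with ⟨m, h1, hM⟩
    exact T (SM hM.symm) (Sg (Sx (p := Sum.inl b) (q := Sum.inr m) h1))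
  · exact SM h
  · rcases h with ⟨m', hM, h2⟩
    exact T (SM hM) (Sy (p := Sum.inl m') (q := Sum.inr b') h2)
  · rcases h with ⟨m, m', h1, hM, h2⟩
    exact T (T (Sg (Sy (p := Sum.inl m') (q := Sum.inr c) h2)) (SM hM.symm))
      (Sg (Sx (p := Sum.inl b) (q := Sum.inr m) h1))
  · rcases h with ⟨m', hM, h2⟩
    exact T (Sg (Sy (p := Sum.inl m') (q := Sum.inr c) h2)) (SM hM.symm)
  · rcases h with h | ⟨m, m', h1, hM, h2⟩
    · exact Sy (p := Sum.inr c) (q := Sum.inr b') h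
    · exact T (T (Sg (Sy (p := Sum.inl m) (q := Sum.inr c) h1)) (SM hM))
        (Sy (p := Sum.inl m') (q := Sum.inr b') h2)

lemma mul_tt (x y : PartitionMonoid n) (a b : Fin n) :
    (x * y).r (Sum.inl a) (Sum.inl b) ↔ (x.r (Sum.inl a) (Sum.inl b) ∨
      ∃ m m', x.r (Sum.inl a) (Sum.inr m) ∧ Mr x y m m' ∧ x.r (Sum.inl b) (Sum.inr m')) :=
  ⟨fun h => S_to_RR h, fun h => RR_to_S (x := x) (y := y)
    (u := Sum.inl a) (v := Sum.inl b) h⟩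

lemma mul_tb (x y : PartitionMonoid n) (a b : Fin n) :
    (x * y).r (Sum.inl a) (Sum.inr b) ↔
      ∃ m m', x.r (Sum.inl a) (Sum.inr m) ∧ Mr x y m m' ∧ y.r (Sum.inl m') (Sum.inr b) :=
  ⟨fun h => S_to_RR h, fun h => RR_to_S (x := x) (y := y)
    (u := Sum.inl a) (v := Sum.inr (Sum.inr b)) h⟩

lemma mul_bb (x y : PartitionMonoid n) (a b : Fin n) :
    (x * y).r (Sum.inr a) (Sum.inr b) ↔ (y.r (Sum.inr a) (Sum.inr b) ∨
      ∃ m m', y.r (Sum.inl m) (Sum.inr a) ∧ Mr x y m m' ∧ y.r (Sum.inl m') (Sum.inr b)) :=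
  ⟨fun h => S_to_RR h, fun h => RR_to_S (x := x) (y := y)
    (u := Sum.inr (Sum.inr a)) (v := Sum.inr (Sum.inr b)) h⟩

end PartitionMonoid

namespace PartitionMonoid

variable {n : ℕ}

lemma star_r (x : PartitionMonoid n) (p q : PBase n) :
    (star x).r p q ↔ x.r (Sum.swap p) (Sum.swap q) := Iff.rfl

lemma star_star (x : PartitionMonoid n) : star (star x) = x :=
  Setoid.ext fun a b => by
    show x.r (Sum.swap (Sum.swap a)) (Sum.swap (Sum.swap b)) ↔ x.r a b
    rw [Sum.swap_swap, Sum.swap_swap]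

/-- flip of the three layers -/
def fl : Tri n → Tri n :=
  Sum.elim (fun a => Sum.inr (Sum.inr a)) (Sum.elim (fun m => Sum.inr (Sum.inl m)) Sum.inl)

lemma fl_ix (p : PBase n) : fl (ix p) = iy (Sum.swap p) := by cases p <;> rfl
lemma fl_iy (p : PBase n) : fl (iy p) = ix (Sum.swap p) := by cases p <;> rfl
lemma fl_iz (p : PBase n) : fl (iz p) = iz (Sum.swap p) := by cases p <;> rfl

lemma star_mul (x y : PartitionMonoid n) : star (x * y) = star y * star x := by
  refine Setoid.ext fun p q => ?_
  show (x * y).r (Sum.swap p) (Sum.swap q) ↔ (star y * star x).r p q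
  show Relation.EqvGen (prodBase x y) (iz (Sum.swap p)) (iz (Sum.swap q)) ↔
    Relation.EqvGen (prodBase (star y) (star x)) (iz p) (iz q)
  constructor
  · intro h
    have h2 := eqvGen_map (r' := prodBase (star y) (star x)) fl ?_ h
    · rwa [fl_iz, fl_iz, Sum.swap_swap, Sum.swap_swap] at h2
    · rintro u v (⟨p', q', rfl, rfl, hr⟩ | ⟨p', q', rfl, rfl, hr⟩)
      · refine .rel _ _ (Or.inr ⟨Sum.swap p', Sum.swap q', (fl_ix p').symm, (fl_ix q').symm, ?_⟩)
        show x.r (Sum.swap (Sum.swap p')) (Sum.swap (Sum.swap q'))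
        rw [Sum.swap_swap, Sum.swap_swap]; exact hr
      · refine .rel _ _ (Or.inl ⟨Sum.swap p', Sum.swap q', (fl_iy p').symm, (fl_iy q').symm, ?_⟩)
        show y.r (Sum.swap (Sum.swap p')) (Sum.swap (Sum.swap q'))
        rw [Sum.swap_swap, Sum.swap_swap]; exact hr
  · intro h
    have h2 := eqvGen_map (r' := prodBase x y) fl ?_ h
    · rwa [fl_iz, fl_iz] at h2
    · rintro u v (⟨p', q', rfl, rfl, hr⟩ | ⟨p', q', rfl, rfl, hr⟩)
      · exact .rel _ _ (Or.inr ⟨Sum.swap p', Sum.swap q', (fl_ix p').symm, (fl_ix q').symm, hr⟩)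
      · exact .rel _ _ (Or.inl ⟨Sum.swap p', Sum.swap q', (fl_iy p').symm, (fl_iy q').symm, hr⟩)

/-! ### Four layers -/

abbrev Quad (n : ℕ) := Fin n ⊕ (Fin n ⊕ (Fin n ⊕ Fin n))

def q1 (a : Fin n) : Quad n := Sum.inl a
def q2 (a : Fin n) : Quad n := Sum.inr (Sum.inl a)
def q3 (a : Fin n) : Quad n := Sum.inr (Sum.inr (Sum.inl a))
def q4 (a : Fin n) : Quad n := Sum.inr (Sum.inr (Sum.inr a))

def e12 : PBase n → Quad n := Sum.elim q1 q2
def e23 : PBase n → Quad n := Sum.elim q2 q3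
def e34 : PBase n → Quad n := Sum.elim q3 q4
def e13 : PBase n → Quad n := Sum.elim q1 q3
def e24 : PBase n → Quad n := Sum.elim q2 q4
def e14 : PBase n → Quad n := Sum.elim q1 q4

def j123 : Tri n → Quad n := Sum.elim q1 (Sum.elim q2 q3)
def j134 : Tri n → Quad n := Sum.elim q1 (Sum.elim q3 q4)
def j124 : Tri n → Quad n := Sum.elim q1 (Sum.elim q2 q4)
def j234 : Tri n → Quad n := Sum.elim q2 (Sum.elim q3 q4)

lemma j123_ix (p : PBase n) : j123 (ix p) = e12 p := by cases p <;> rfl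
lemma j123_iy (p : PBase n) : j123 (iy p) = e23 p := by cases p <;> rfl
lemma j123_iz (p : PBase n) : j123 (iz p) = e13 p := by cases p <;> rfl
lemma j134_ix (p : PBase n) : j134 (ix p) = e13 p := by cases p <;> rfl
lemma j134_iy (p : PBase n) : j134 (iy p) = e34 p := by cases p <;> rfl
lemma j134_iz (p : PBase n) : j134 (iz p) = e14 p := by cases p <;> rfl
lemma j124_ix (p : PBase n) : j124 (ix p) = e12 p := by cases p <;> rfl
lemma j124_iy (p : PBase n) : j124 (iy p) = e24 p := by cases p <;> rfl
lemma j124_iz (p : PBase n) : j124 (iz p) = e14 p := by cases p <;> rfl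
lemma j234_ix (p : PBase n) : j234 (ix p) = e23 p := by cases p <;> rfl
lemma j234_iy (p : PBase n) : j234 (iy p) = e34 p := by cases p <;> rfl
lemma j234_iz (p : PBase n) : j234 (iz p) = e24 p := by cases p <;> rfl

lemma j123_inj : Function.Injective (j123 (n := n)) := by
  rintro (a | m | b) (a' | m' | b') h <;> simp [j123, q1, q2, q3, q4] at h <;> simp [h]
lemma j134_inj : Function.Injective (j134 (n := n)) := by
  rintro (a | m | b) (a' | m' | b') h <;> simp [j134, q1, q2, q3, q4] at h <;> simp [h]
lemma j124_inj : Function.Injective (j124 (n := n)) := by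
  rintro (a | m | b) (a' | m' | b') h <;> simp [j124, q1, q2, q3, q4] at h <;> simp [h]
lemma j234_inj : Function.Injective (j234 (n := n)) := by
  rintro (a | m | b) (a' | m' | b') h <;> simp [j234, q1, q2, q3, q4] at h <;> simp [h]
lemma e12_inj : Function.Injective (e12 (n := n)) := by
  rintro (a | b) (a' | b') h <;> simp [e12, q1, q2] at h <;> simp [h]
lemma e34_inj : Function.Injective (e34 (n := n)) := by
  rintro (a | b) (a' | b') h <;> simp [e34, q3, q4] at h <;> simp [h]

def genOf (f : PBase n → Quad n) (x : PartitionMonoid n) (u v : Quad n) : Prop :=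
  ∃ p q, f p = u ∧ f q = v ∧ x.r p q

lemma embTri (x y : PartitionMonoid n) (h : Tri n → Quad n) (hinj : Function.Injective h)
    (f g : PBase n → Quad n) (hf : ∀ p, h (ix p) = f p) (hg : ∀ p, h (iy p) = g p)
    (u v : Tri n) :
    Relation.EqvGen (prodBase x y) u v ↔
      Relation.EqvGen (fun u v => genOf f x u v ∨ genOf g y u v) (h u) (h v) := by
  refine emb_eqvGen h hinj ?_ ?_ u v
  · rintro u v (⟨p, q, rfl, rfl, hr⟩ | ⟨p, q, rfl, rfl, hr⟩)
    · exact Or.inl ⟨p, q, (hf p).symm, (hf q).symm, hr⟩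
    · exact Or.inr ⟨p, q, (hg p).symm, (hg q).symm, hr⟩
  · rintro u v (⟨p, q, rfl, rfl, hr⟩ | ⟨p, q, rfl, rfl, hr⟩)
    · exact ⟨ix p, ix q, hf p, hf q, .rel _ _ (Or.inl ⟨p, q, rfl, rfl, hr⟩)⟩
    · exact ⟨iy p, iy q, hg p, hg q, .rel _ _ (Or.inr ⟨p, q, rfl, rfl, hr⟩)⟩

def QB (x y z : PartitionMonoid n) (u v : Quad n) : Prop :=
  genOf e12 x u v ∨ genOf e23 y u v ∨ genOf e34 z u v

end PartitionMonoid

namespace PartitionMonoid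

variable {n : ℕ}

/-- equivalence relating all points satisfying `P`, plus the diagonal. -/
def flagged {α : Type*} (P : α → Prop) : Setoid α where
  r u v := u = v ∨ (P u ∧ P v)
  iseqv := by
    refine ⟨fun u => Or.inl rfl, ?_, ?_⟩
    · rintro u v (rfl | ⟨h1, h2⟩)
      · exact Or.inl rfl
      · exact Or.inr ⟨h2, h1⟩
    · rintro u v w (rfl | ⟨h1, h2⟩) h3
      · exact h3
      · rcases h3 with rfl | ⟨h3, h4⟩
        · exact Or.inr ⟨h1, h2⟩
        · exact Or.inr ⟨h1, h4⟩

/-- `EqvGen` of the `x,y`-part of `QB` only relates a 4th-layer point to itself. -/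
lemma xy_triv4 (x y : PartitionMonoid n) {u v : Quad n}
    (h : Relation.EqvGen (fun u v => genOf e12 x u v ∨ genOf e23 y u v) u v) :
    u = v ∨ ((∀ m, u ≠ q4 m) ∧ (∀ m, v ≠ q4 m)) := by
  refine eqvGen_le (s := flagged (fun u => ∀ m, u ≠ q4 m)) ?_ h
  rintro u v (⟨p, q, rfl, rfl, _⟩ | ⟨p, q, rfl, rfl, _⟩)
  · exact Or.inr ⟨by rcases p with a | a <;> simp [e12, q1, q2, q4],
      by rcases q with a | a <;> simp [e12, q1, q2, q4]⟩
  · exact Or.inr ⟨by rcases p with a | a <;> simp [e23, q2, q3, q4],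
      by rcases q with a | a <;> simp [e23, q2, q3, q4]⟩

/-- Similarly for the `y,z` part and the 1st layer. -/
lemma yz_triv1 (y z : PartitionMonoid n) {u v : Quad n}
    (h : Relation.EqvGen (fun u v => genOf e23 y u v ∨ genOf e34 z u v) u v) :
    u = v ∨ ((∀ m, u ≠ q1 m) ∧ (∀ m, v ≠ q1 m)) := by
  refine eqvGen_le (s := flagged (fun u => ∀ m, u ≠ q1 m)) ?_ h
  rintro u v (⟨p, q, rfl, rfl, _⟩ | ⟨p, q, rfl, rfl, _⟩)
  · exact Or.inr ⟨by rcases p with a | a <;> simp [e23, q2, q3, q1],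
      by rcases q with a | a <;> simp [e23, q2, q3, q1]⟩
  · exact Or.inr ⟨by rcases p with a | a <;> simp [e34, q3, q4, q1],
      by rcases q with a | a <;> simp [e34, q3, q4, q1]⟩

lemma quad1 (x y z : PartitionMonoid n) (p q : PBase n) :
    ((x * y) * z).r p q ↔ Relation.EqvGen (QB x y z) (e14 p) (e14 q) := by
  have hA := embTri (x * y) z j134 j134_inj e13 e34 j134_ix j134_iy (iz p) (iz q)
  rw [j134_iz, j134_iz] at hA
  refine hA.trans ?_
  constructor
  · -- from the two-layer picture of `(x*y), z` to `QB`
    intro h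
    refine eqvGen_map id ?_ h
    rintro u v (⟨p', q', rfl, rfl, hr⟩ | ⟨p', q', rfl, rfl, hr⟩)
    · -- hr : (x * y).r p' q'
      have h2 : Relation.EqvGen (prodBase x y) (iz p') (iz q') := hr
      have h3 := eqvGen_map (r' := QB x y z) j123 ?_ h2
      · rwa [j123_iz, j123_iz] at h3
      · rintro u v (⟨p'', q'', rfl, rfl, hr'⟩ | ⟨p'', q'', rfl, rfl, hr'⟩)
        · exact .rel _ _ (Or.inl ⟨p'', q'', (j123_ix p'').symm, (j123_ix q'').symm, hr'⟩)
        · exact .rel _ _ (Or.inr (Or.inl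
            ⟨p'', q'', (j123_iy p'').symm, (j123_iy q'').symm, hr'⟩))
    · exact .rel _ _ (Or.inr (Or.inr ⟨p', q', rfl, rfl, hr⟩))
  · -- hard direction
    intro h
    set U : Setoid (Quad n) :=
      Relation.EqvGen.setoid (fun u v => genOf e12 x u v ∨ genOf e23 y u v) with hU
    set Z : Setoid (Quad n) := spush e34 e34_inj z with hZ
    have step1 : Relation.EqvGen (fun u v => U.r u v ∨ Z.r u v) (e14 p) (e14 q) := by
      refine eqvGen_map id ?_ h
      rintro u v (g | g | g)
      · exact .rel _ _ (Or.inl (.rel _ _ (Or.inl g)))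
      · exact .rel _ _ (Or.inl (.rel _ _ (Or.inr g)))
      · rcases g with ⟨p', q', rfl, rfl, hr⟩
        exact .rel _ _ (Or.inr (Or.inr ⟨p', q', rfl, rfl, hr⟩))
    have hz : ∀ a b, Z.r a b → a = b ∨ (a ∈ {u : Quad n | ∀ m, u ≠ q2 m} ∧
        b ∈ {u : Quad n | ∀ m, u ≠ q2 m}) := by
      rintro a b (rfl | ⟨p', q', rfl, rfl, _⟩)
      · exact Or.inl rfl
      · exact Or.inr ⟨by rcases p' with a | a <;> simp [e34, q3, q4, q2],
          by rcases q' with a | a <;> simp [e34, q3, q4, q2]⟩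
    have hp : e14 p ∈ {u : Quad n | ∀ m, u ≠ q2 m} := by
      rcases p with a | a <;> simp [e14, q1, q4, q2]
    have hq : e14 q ∈ {u : Quad n | ∀ m, u ≠ q2 m} := by
      rcases q with a | a <;> simp [e14, q1, q4, q2]
    have step2 := glue U Z {u : Quad n | ∀ m, u ≠ q2 m} hz hp hq step1
    refine eqvGen_le (s := Relation.EqvGen.setoid
      (fun u v => genOf e13 (x * y) u v ∨ genOf e34 z u v)) ?_ step2
    rintro u v (hres | hZr)
    · rcases hres with rfl | ⟨hu, hv, hUr⟩
      · exact .refl _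
      · -- hUr : U.r u v with u v avoiding layer 2
        rcases xy_triv4 x y hUr with rfl | ⟨hu4, hv4⟩
        · exact .refl _
        · -- u, v are in layers 1 or 3
          have hu13 : ∃ pu : PBase n, e13 pu = u := by
            rcases u with a | a | a | a
            · exact ⟨Sum.inl a, rfl⟩
            · exact absurd rfl (hu a)
            · exact ⟨Sum.inr a, rfl⟩
            · exact absurd rfl (hu4 a)
          have hv13 : ∃ pv : PBase n, e13 pv = v := by
            rcases v with a | a | a | a
            · exact ⟨Sum.inl a, rfl⟩
            · exact absurd rfl (hv a)
            · exact ⟨Sum.inr a, rfl⟩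
            · exact absurd rfl (hv4 a)
          obtain ⟨pu, rfl⟩ := hu13
          obtain ⟨pv, rfl⟩ := hv13
          have := (embTri x y j123 j123_inj e12 e23 j123_ix j123_iy (iz pu) (iz pv)).mpr
            (by rwa [j123_iz, j123_iz])
          exact .rel _ _ (Or.inl ⟨pu, pv, rfl, rfl, this⟩)
    · rcases hZr with rfl | ⟨p', q', rfl, rfl, hr⟩
      · exact .refl _
      · exact .rel _ _ (Or.inr ⟨p', q', rfl, rfl, hr⟩)

lemma quad2 (x y z : PartitionMonoid n) (p q : PBase n) :
    (x * (y * z)).r p q ↔ Relation.EqvGen (QB x y z) (e14 p) (e14 q) := by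
  have hA := embTri x (y * z) j124 j124_inj e12 e24 j124_ix j124_iy (iz p) (iz q)
  rw [j124_iz, j124_iz] at hA
  refine hA.trans ?_
  constructor
  · intro h
    refine eqvGen_map id ?_ h
    rintro u v (⟨p', q', rfl, rfl, hr⟩ | ⟨p', q', rfl, rfl, hr⟩)
    · exact .rel _ _ (Or.inl ⟨p', q', rfl, rfl, hr⟩)
    · have h2 : Relation.EqvGen (prodBase y z) (iz p') (iz q') := hr
      have h3 := eqvGen_map (r' := QB x y z) j234 ?_ h2
      · rwa [j234_iz, j234_iz] at h3
      · rintro u v (⟨p'', q'', rfl, rfl, hr'⟩ | ⟨p'', q'', rfl, rfl, hr'⟩)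
        · exact .rel _ _ (Or.inr (Or.inl
            ⟨p'', q'', (j234_ix p'').symm, (j234_ix q'').symm, hr'⟩))
        · exact .rel _ _ (Or.inr (Or.inr
            ⟨p'', q'', (j234_iy p'').symm, (j234_iy q'').symm, hr'⟩))
  · intro h
    set U : Setoid (Quad n) :=
      Relation.EqvGen.setoid (fun u v => genOf e23 y u v ∨ genOf e34 z u v) with hU
    set Z : Setoid (Quad n) := spush e12 e12_inj x with hZ
    have step1 : Relation.EqvGen (fun u v => U.r u v ∨ Z.r u v) (e14 p) (e14 q) := by
      refine eqvGen_map id ?_ h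
      rintro u v (g | g | g)
      · rcases g with ⟨p', q', rfl, rfl, hr⟩
        exact .rel _ _ (Or.inr (Or.inr ⟨p', q', rfl, rfl, hr⟩))
      · exact .rel _ _ (Or.inl (.rel _ _ (Or.inl g)))
      · exact .rel _ _ (Or.inl (.rel _ _ (Or.inr g)))
    have hz : ∀ a b, Z.r a b → a = b ∨ (a ∈ {u : Quad n | ∀ m, u ≠ q3 m} ∧
        b ∈ {u : Quad n | ∀ m, u ≠ q3 m}) := by
      rintro a b (rfl | ⟨p', q', rfl, rfl, _⟩)
      · exact Or.inl rfl
      · exact Or.inr ⟨by rcases p' with a | a <;> simp [e12, q1, q2, q3],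
          by rcases q' with a | a <;> simp [e12, q1, q2, q3]⟩
    have hp : e14 p ∈ {u : Quad n | ∀ m, u ≠ q3 m} := by
      rcases p with a | a <;> simp [e14, q1, q4, q3]
    have hq : e14 q ∈ {u : Quad n | ∀ m, u ≠ q3 m} := by
      rcases q with a | a <;> simp [e14, q1, q4, q3]
    have step2 := glue U Z {u : Quad n | ∀ m, u ≠ q3 m} hz hp hq step1
    refine eqvGen_le (s := Relation.EqvGen.setoid
      (fun u v => genOf e12 x u v ∨ genOf e24 (y * z) u v)) ?_ step2
    rintro u v (hres | hZr)
    · rcases hres with rfl | ⟨hu, hv, hUr⟩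
      · exact .refl _
      · rcases yz_triv1 y z hUr with rfl | ⟨hu1, hv1⟩
        · exact .refl _
        · have hu24 : ∃ pu : PBase n, e24 pu = u := by
            rcases u with a | a | a | a
            · exact absurd rfl (hu1 a)
            · exact ⟨Sum.inl a, rfl⟩
            · exact absurd rfl (hu a)
            · exact ⟨Sum.inr a, rfl⟩
          have hv24 : ∃ pv : PBase n, e24 pv = v := by
            rcases v with a | a | a | a
            · exact absurd rfl (hv1 a)
            · exact ⟨Sum.inl a, rfl⟩
            · exact absurd rfl (hv a)
            · exact ⟨Sum.inr a, rfl⟩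
          obtain ⟨pu, rfl⟩ := hu24
          obtain ⟨pv, rfl⟩ := hv24
          have := (embTri y z j234 j234_inj e23 e34 j234_ix j234_iy (iz pu) (iz pv)).mpr
            (by rwa [j234_iz, j234_iz])
          exact .rel _ _ (Or.inr ⟨pu, pv, rfl, rfl, this⟩)
    · rcases hZr with rfl | ⟨p', q', rfl, rfl, hr⟩
      · exact .refl _
      · exact .rel _ _ (Or.inl ⟨p', q', rfl, rfl, hr⟩)

lemma pmul_assoc (x y z : PartitionMonoid n) : (x * y) * z = x * (y * z) :=
  Setoid.ext fun p q => (quad1 x y z p q).trans (quad2 x y z p q).symm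

end PartitionMonoid

namespace PartitionMonoid

variable {n : ℕ}

/-- collapse map for the `x ⋅ x* ⋅ x = x` computation -/
def Fc : Quad n → PBase n :=
  Sum.elim Sum.inl (Sum.elim Sum.inr (Sum.elim Sum.inl Sum.inr))

lemma Fc_e12 (p : PBase n) : Fc (e12 p) = p := by cases p <;> rfl
lemma Fc_e23 (p : PBase n) : Fc (e23 p) = Sum.swap p := by cases p <;> rfl
lemma Fc_e34 (p : PBase n) : Fc (e34 p) = p := by cases p <;> rfl
lemma Fc_e14 (p : PBase n) : Fc (e14 p) = p := by cases p <;> rfl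

lemma quadQ_iff_x (x : PartitionMonoid n) (p q : PBase n) :
    Relation.EqvGen (QB x (star x) x) (e14 p) (e14 q) ↔ x.r p q := by
  constructor
  · intro h
    have h2 := eqvGen_le (s := Setoid.comap Fc x) ?_ h
    · change x.r (Fc (e14 p)) (Fc (e14 q)) at h2
      rwa [Fc_e14, Fc_e14] at h2
    · rintro u v (⟨p', q', rfl, rfl, hr⟩ | ⟨p', q', rfl, rfl, hr⟩ | ⟨p', q', rfl, rfl, hr⟩)
      · change x.r (Fc (e12 p')) (Fc (e12 q'))
        rwa [Fc_e12, Fc_e12]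
      · change x.r (Fc (e23 p')) (Fc (e23 q'))
        rw [Fc_e23, Fc_e23]; exact hr
      · change x.r (Fc (e34 p')) (Fc (e34 q'))
        rwa [Fc_e34, Fc_e34]
  · intro h
    rcases p with a | a <;> rcases q with b | b
    · exact .rel _ _ (Or.inl ⟨Sum.inl a, Sum.inl b, rfl, rfl, h⟩)
    · -- x.r (inl a) (inr b) : go down the layers
      refine Relation.EqvGen.trans _ _ _ (Relation.EqvGen.trans _ _ _
        (.rel _ _ (Or.inl ⟨Sum.inl a, Sum.inr b, rfl, rfl, h⟩))
        (.rel _ _ (Or.inr (Or.inl ⟨Sum.inl b, Sum.inr a, rfl, rfl, ?_⟩)))) ?_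
      · show x.r (Sum.swap (Sum.inl b)) (Sum.swap (Sum.inr a))
        exact x.symm' h
      · exact .rel _ _ (Or.inr (Or.inr ⟨Sum.inl a, Sum.inr b, rfl, rfl, h⟩))
    · refine Relation.EqvGen.symm _ _ ?_
      refine Relation.EqvGen.trans _ _ _ (Relation.EqvGen.trans _ _ _
        (.rel _ _ (Or.inl ⟨Sum.inl b, Sum.inr a, rfl, rfl, x.symm' h⟩))
        (.rel _ _ (Or.inr (Or.inl ⟨Sum.inl a, Sum.inr b, rfl, rfl, ?_⟩)))) ?_
      · show x.r (Sum.swap (Sum.inl a)) (Sum.swap (Sum.inr b))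
        exact h
      · exact .rel _ _ (Or.inr (Or.inr ⟨Sum.inl b, Sum.inr a, rfl, rfl, x.symm' h⟩))
    · exact .rel _ _ (Or.inr (Or.inr ⟨Sum.inr a, Sum.inr b, rfl, rfl, h⟩))

lemma mul_star_self (x : PartitionMonoid n) : x * (star x * x) = x :=
  Setoid.ext fun p q => (quad2 x (star x) x p q).trans (quadQ_iff_x x p q)

lemma star_mul_self_mul (x : PartitionMonoid n) : (x * star x) * x = x :=
  Setoid.ext fun p q => (quad1 x (star x) x p q).trans (quadQ_iff_x x p q)

lemma star_proj (x : PartitionMonoid n) : star (star x * x) = star x * x := by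
  rw [star_mul, star_star]

lemma proj_idem (x : PartitionMonoid n) :
    (star x * x) * (star x * x) = star x * x := by
  rw [pmul_assoc, mul_star_self]

/-! ### Green's L-relation -/

lemma pL_refl (x : PartitionMonoid n) : pL x x := ⟨Or.inl rfl, Or.inl rfl⟩

lemma pL_symm {x y : PartitionMonoid n} (h : pL x y) : pL y x := ⟨h.2, h.1⟩

lemma pL_trans {x y z : PartitionMonoid n} (h : pL x y) (h' : pL y z) : pL x z := by
  constructor
  · rcases h.1 with rfl | ⟨a, rfl⟩
    · exact h'.1
    · rcases h'.1 with h2 | ⟨b, rfl⟩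
      · exact Or.inr ⟨a, h2⟩
      · exact Or.inr ⟨b * a, (pmul_assoc b a x).symm ▸ rfl⟩
  · rcases h'.2 with rfl | ⟨a, rfl⟩
    · exact h.2
    · rcases h.2 with h2 | ⟨b, rfl⟩
      · exact Or.inr ⟨a, h2⟩
      · exact Or.inr ⟨b * a, (pmul_assoc b a z).symm ▸ rfl⟩

lemma pL_e (x : PartitionMonoid n) : pL x (star x * x) :=
  ⟨Or.inr ⟨star x, rfl⟩, Or.inr ⟨x, mul_star_self x⟩⟩

lemma lambda_ker (x y : PartitionMonoid n) : star x * x = star y * y ↔ pL x y := by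
  constructor
  · intro h
    refine pL_trans (pL_e x) ?_
    rw [h]
    exact pL_symm (pL_e y)
  · rintro ⟨h1, h2⟩
    rcases h1 with rfl | ⟨a, rfl⟩
    · rfl
    · rcases h2 with h2 | ⟨b, hb⟩
      · rw [h2]
      · -- x = b * (a * x), y = a * x
        set y := a * x with hy
        have hxey : x * (star x * x) = x := mul_star_self x
        have hyey : y * (star x * x) = y := by
          rw [hy, pmul_assoc, hxey]
        have hxex : x * (star y * y) = x := by
          rw [← hb, pmul_assoc, mul_star_self]
        have h1 : (star y * y) * (star x * x) = star y * y := by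
          rw [pmul_assoc (star y) y (star x * x), hyey]
        have h2 : (star x * x) * (star y * y) = star x * x := by
          rw [pmul_assoc (star x) x (star y * y), hxex]
        calc star x * x = star ((star x * x) * (star y * y)) := by
              rw [h2, star_proj]
          _ = star (star y * y) * star (star x * x) := by rw [star_mul]
          _ = (star y * y) * (star x * x) := by rw [star_proj, star_proj]
          _ = star y * y := h1

lemma lambda_hom (x s : PartitionMonoid n) :
    star (x * s) * (x * s) = star s * (star x * x) * s := by
  rw [star_mul, pmul_assoc (star s) (star x) (x * s), ← pmul_assoc (star x) x s,
    ← pmul_assoc (star s) (star x * x) s]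

end PartitionMonoid

namespace PartitionMonoid

variable {n : ℕ}

lemma proj_swap (x : PartitionMonoid n) (u v : PBase n) :
    (star x * x).r (Sum.swap u) (Sum.swap v) ↔ (star x * x).r u v := by
  constructor
  · intro h
    have h2 : (star (star x * x)).r u v := h
    rwa [star_proj] at h2
  · intro h
    have h2 : (star (star x * x)).r u v := by rwa [star_proj]
    exact h2

/-- transverse blocks of a projection are symmetric -/
lemma trans_symm (x : PartitionMonoid n) {k j : Fin n}
    (h : (star x * x).r (Sum.inl k) (Sum.inr j)) :
    (star x * x).r (Sum.inl k) (Sum.inr k) := by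
  have h2 : (star x * x).r (Sum.inl j) (Sum.inr k) := by
    have := (proj_swap x (Sum.inr j) (Sum.inl k)).2 ((star x * x).symm' h)
    exact this
  have h3 : ((star x * x) * (star x * x)).r (Sum.inl k) (Sum.inr k) :=
    (mul_tb _ _ _ _).2 ⟨j, j, h, Mr.refl _ _ j, h2⟩
  rwa [proj_idem] at h3

lemma tb_of_cross (x : PartitionMonoid n) {k j : Fin n}
    (h : (star x * x).r (Sum.inl k) (Sum.inr j)) :
    (∃ i, (star x * x).r (Sum.inl j) (Sum.inr i)) := by
  refine ⟨k, ?_⟩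
  have := (proj_swap x (Sum.inr j) (Sum.inl k)).2 ((star x * x).symm' h)
  exact this

/-- rows of a projection -/
lemma proj_row (x : PartitionMonoid n) (a b : Fin n) :
    (star x * x).r (Sum.inl a) (Sum.inl b) ↔ (star x * x).r (Sum.inr a) (Sum.inr b) :=
  proj_swap x (Sum.inr a) (Sum.inr b)

lemma Mr_star (w : PartitionMonoid n) {m m' : Fin n} (h : Mr (star w) w m m') :
    w.r (Sum.inl m) (Sum.inl m') := by
  refine eqvGen_le (s := Setoid.comap Sum.inl w) ?_ h
  rintro u v (hr | hr) <;> exact hr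

/-- `y ∈ T`: cokernel of `y` computes `e` on the negative points -/
lemma coker_eq {x y : PartitionMonoid n} (hy : star y * y = star x * x) (a b : Fin n) :
    y.r (Sum.inr a) (Sum.inr b) ↔ (star x * x).r (Sum.inr a) (Sum.inr b) := by
  rw [← hy]
  constructor
  · intro h
    exact (mul_bb _ _ _ _).2 (Or.inl h)
  · intro h
    rcases (mul_bb _ _ _ _).1 h with h | ⟨m, m', h1, hM, h2⟩
    · exact h
    · exact y.trans' (y.symm' h1) (y.trans' (Mr_star y hM) h2)

/-- `y ∈ T`: targets of transverse blocks of `y` are transverse points of `e` -/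
lemma ytb {x y : PartitionMonoid n} (hy : star y * y = star x * x) {a m : Fin n}
    (h : y.r (Sum.inl a) (Sum.inr m)) :
    ∃ j, (star x * x).r (Sum.inl m) (Sum.inr j) := by
  refine ⟨m, ?_⟩
  rw [← hy]
  exact (mul_tb _ _ _ _).2 ⟨a, a, y.symm' h, Mr.refl _ _ a, h⟩

lemma y_mul_e {x y : PartitionMonoid n} (hy : star y * y = star x * x) :
    y * (star x * x) = y := by
  rw [← hy]; exact mul_star_self y

section Wfacts

variable {x W : PartitionMonoid n}

lemma wcross_tb (hW1 : (star x * x) * W = W) {m b : Fin n} (h : W.r (Sum.inl m) (Sum.inr b)) :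
    ∃ j, (star x * x).r (Sum.inl m) (Sum.inr j) := by
  rw [← hW1] at h
  rcases (mul_tb _ _ _ _).1 h with ⟨μ, μ', h1, _, _⟩
  exact ⟨μ, h1⟩

lemma weps (hW1 : (star x * x) * W = W) {a b : Fin n} (h : (star x * x).r (Sum.inr a) (Sum.inr b)) :
    W.r (Sum.inl a) (Sum.inl b) := by
  have h2 : (star x * x).r (Sum.inl a) (Sum.inl b) := (proj_row x a b).2 h
  rw [← hW1]
  exact (mul_tt _ _ _ _).2 (Or.inl h2)

lemma wbt (hW2 : star W * W = star x * x) {k : Fin n} (hk : ∃ j, (star x * x).r (Sum.inl k) (Sum.inr j)) :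
    ∃ μ, W.r (Sum.inl μ) (Sum.inr k) := by
  obtain ⟨j, hj⟩ := hk
  have h2 := trans_symm x hj
  rw [← hW2] at h2
  rcases (mul_tb _ _ _ _).1 h2 with ⟨m, m', _, _, h3⟩
  exact ⟨m', h3⟩

lemma wkey0 (hW2 : star W * W = star x * x) {μ μ' k k' : Fin n} (h1 : W.r (Sum.inl μ) (Sum.inr k))
    (h2 : W.r (Sum.inl μ') (Sum.inr k')) (h3 : W.r (Sum.inl μ) (Sum.inl μ')) :
    (star x * x).r (Sum.inr k) (Sum.inr k') := by
  rw [← hW2]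
  exact (mul_bb _ _ _ _).2 (Or.inr ⟨μ, μ', h1, Mr.of_x h3, h2⟩)

end Wfacts

lemma pigeon {n : ℕ} (ε τ : Fin n → Fin n → Prop) (P : Fin n → Prop)
    (hεr : ∀ a, ε a a) (hεs : ∀ {a b}, ε a b → ε b a)
    (hεt : ∀ {a b c}, ε a b → ε b c → ε a c)
    (hτr : ∀ a, τ a a) (hτs : ∀ {a b}, τ a b → τ b a)
    (hτt : ∀ {a b c}, τ a b → τ b c → τ a c)
    (hετ : ∀ {a b}, ε a b → τ a b)
    (hPsat : ∀ {a b}, P a → ε a b → P b)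
    (Ψ : Fin n → Fin n) (hΨP : ∀ k, P k → P (Ψ k))
    (hkey : ∀ {k k'}, P k → P k' → τ (Ψ k) (Ψ k') → ε k k')
    {m : Fin n} (hm : P m) : ∃ k, P k ∧ τ m (Ψ k) := by
  classical
  set rε : Fin n → Fin n :=
    fun k => (Finset.univ.filter fun j => ε k j).min' ⟨k, by simp [hεr]⟩ with hrεdef
  set rτ : Fin n → Fin n :=
    fun k => (Finset.univ.filter fun j => τ k j).min' ⟨k, by simp [hτr]⟩ with hrτdef
  have hrεrel : ∀ k, ε k (rε k) := by
    intro k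
    have := Finset.min'_mem (Finset.univ.filter fun j => ε k j) ⟨k, by simp [hεr]⟩
    simp only [Finset.mem_filter] at this
    exact this.2
  have hrτrel : ∀ k, τ k (rτ k) := by
    intro k
    have := Finset.min'_mem (Finset.univ.filter fun j => τ k j) ⟨k, by simp [hτr]⟩
    simp only [Finset.mem_filter] at this
    exact this.2
  have hrεeq : ∀ k k', ε k k' → rε k = rε k' := by
    intro k k' h
    refine le_antisymm ?_ ?_
    · exact Finset.min'_le _ _ (by simp [hεt h (hrεrel k')])
    · exact Finset.min'_le _ _ (by simp [hεt (hεs h) (hrεrel k)])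
  have hrτeq : ∀ k k', τ k k' → rτ k = rτ k' := by
    intro k k' h
    refine le_antisymm ?_ ?_
    · exact Finset.min'_le _ _ (by simp [hτt h (hrτrel k')])
    · exact Finset.min'_le _ _ (by simp [hτt (hτs h) (hrτrel k)])
  have hεof : ∀ k k', rε k = rε k' → ε k k' := by
    intro k k' h
    have h1 := hrεrel k
    rw [h] at h1
    exact hεt h1 (hεs (hrεrel k'))
  have hτof : ∀ k k', rτ k = rτ k' → τ k k' := by
    intro k k' h
    have h1 := hrτrel k
    rw [h] at h1
    exact hτt h1 (hτs (hrτrel k'))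
  set TBs : Finset (Fin n) := Finset.univ.filter P with hTBs
  set S1 : Finset (Fin n) := TBs.image rε with hS1
  have hS1P : ∀ k ∈ S1, P k := by
    intro k hk
    rw [hS1, Finset.mem_image] at hk
    obtain ⟨k0, hk0, rfl⟩ := hk
    rw [hTBs, Finset.mem_filter] at hk0
    exact hPsat hk0.2 (hrεrel k0)
  have hS1fix : ∀ k ∈ S1, rε k = k := by
    intro k hk
    rw [hS1, Finset.mem_image] at hk
    obtain ⟨k0, _, rfl⟩ := hk
    exact (hrεeq _ _ (hrεrel k0)).symm
  set T2 : Finset (Fin n) := TBs.image rτ with hT2def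
  have hT2 : T2 = S1.image rτ := by
    rw [hT2def, hS1, Finset.image_image]
    refine (Finset.image_congr ?_).symm
    intro k _
    exact hrτeq _ _ (hτs (hετ (hrεrel k)))
  have hinj : Set.InjOn (fun k => rτ (Ψ k)) S1 := by
    intro k hk k' hk' h
    have hτΨ : τ (Ψ k) (Ψ k') := hτof _ _ h
    have hε : ε k k' := hkey (hS1P k hk) (hS1P k' hk') hτΨ
    rw [← hS1fix k hk, ← hS1fix k' hk']
    exact hrεeq _ _ hε
  have hsub : S1.image (fun k => rτ (Ψ k)) ⊆ T2 := by
    intro u hu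
    rw [Finset.mem_image] at hu
    obtain ⟨k, hk, rfl⟩ := hu
    rw [hT2def]
    refine Finset.mem_image_of_mem _ ?_
    rw [hTBs, Finset.mem_filter]
    exact ⟨Finset.mem_univ _, hΨP k (hS1P k hk)⟩
  have hcard : T2.card ≤ (S1.image (fun k => rτ (Ψ k))).card := by
    rw [Finset.card_image_of_injOn hinj, hT2]
    exact Finset.card_image_le
  have heq := Finset.eq_of_subset_of_card_le hsub hcard
  have hmT2 : rτ m ∈ T2 := by
    rw [hT2def]
    exact Finset.mem_image_of_mem _ (by rw [hTBs, Finset.mem_filter]; exact ⟨Finset.mem_univ _, hm⟩)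
  rw [← heq, Finset.mem_image] at hmT2
  obtain ⟨k, hkS1, hk⟩ := hmT2
  exact ⟨k, hS1P k hkS1, hτs (hτof _ _ hk)⟩

/-- every transverse point of `e` is transverse in `W` -/
lemma wall {x W : PartitionMonoid n} (hW1 : (star x * x) * W = W)
    (hW2 : star W * W = star x * x) {k : Fin n}
    (hk : ∃ j, (star x * x).r (Sum.inl k) (Sum.inr j)) :
    ∃ j, W.r (Sum.inl k) (Sum.inr j) := by
  classical
  set Ψ : Fin n → Fin n :=
    fun k => if h : ∃ μ, W.r (Sum.inl μ) (Sum.inr k) then h.choose else k with hΨdef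
  have hΨ : ∀ k, (∃ j, (star x * x).r (Sum.inl k) (Sum.inr j)) →
      W.r (Sum.inl (Ψ k)) (Sum.inr k) := by
    intro k hk
    have hbt := wbt hW2 hk
    rw [hΨdef]
    simp only [hbt, dif_pos]
    exact hbt.choose_spec
  have key := pigeon (fun a b => (star x * x).r (Sum.inr a) (Sum.inr b))
    (fun a b => W.r (Sum.inl a) (Sum.inl b))
    (fun k => ∃ j, (star x * x).r (Sum.inl k) (Sum.inr j))
    (fun a => (star x * x).refl' _) (fun h => (star x * x).symm' h)
    (fun h h' => (star x * x).trans' h h')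
    (fun a => W.refl' _) (fun h => W.symm' h) (fun h h' => W.trans' h h')
    (fun h => weps hW1 h)
    (fun hP hab => by
      obtain ⟨j, hj⟩ := hP
      have h1 := trans_symm x hj
      have h2 := (star x * x).trans' h1 hab
      exact tb_of_cross x h2)
    Ψ
    (fun k hkP => wcross_tb hW1 (hΨ k hkP))
    (fun {k k'} hkP hkP' hτ => wkey0 hW2 (hΨ k hkP) (hΨ k' hkP') hτ)
    hk
  obtain ⟨k', hk'P, hτ⟩ := key
  exact ⟨k', W.trans' hτ (hΨ k' hk'P)⟩

end PartitionMonoid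

namespace PartitionMonoid

variable {n : ℕ}

lemma core (x f g : PartitionMonoid n)
    (hf : star (x * f) * (x * f) = star x * x)
    (hg : star (x * g) * (x * g) = star x * x)
    (hfg : ∀ k l : Fin n, (∃ j, (star x * x).r (Sum.inl k) (Sum.inr j)) →
      (((star x * x) * f).r (Sum.inl k) (Sum.inr l) ↔
        ((star x * x) * g).r (Sum.inl k) (Sum.inr l)))
    (y : PartitionMonoid n) (hy : star y * y = star x * x) : y * f = y * g := by
  have hW2 : ∀ w : PartitionMonoid n, star (x * w) * (x * w) = star x * x →
      star ((star x * x) * w) * ((star x * x) * w) = star x * x := by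
    intro w hw
    have h1 : star ((star x * x) * w) * ((star x * x) * w) = star w * ((star x * x) * w) := by
      rw [star_mul, star_proj, pmul_assoc (star w) (star x * x) ((star x * x) * w),
        ← pmul_assoc (star x * x) (star x * x) w, proj_idem]
    have h2 : star w * ((star x * x) * w) = star x * x := by
      rw [star_mul, pmul_assoc (star w) (star x) (x * w), ← pmul_assoc (star x) x w] at hw
      exact hw
    exact h1.trans h2
  have hW1 : ∀ w : PartitionMonoid n,
      (star x * x) * ((star x * x) * w) = (star x * x) * w := by
    intro w
    rw [← pmul_assoc, proj_idem]
  have hW1f := hW1 f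
  have hW1g := hW1 g
  have hW2f := hW2 f hf
  have hW2g := hW2 g hg
  have hred : y * f = y * ((star x * x) * f) := by
    rw [← pmul_assoc, y_mul_e hy]
  have hredg : y * g = y * ((star x * x) * g) := by
    rw [← pmul_assoc, y_mul_e hy]
  rw [hred, hredg]
  -- mid-collapse
  have mcF : ∀ {m m' : Fin n}, Mr y ((star x * x) * f) m m' →
      ((star x * x) * f).r (Sum.inl m) (Sum.inl m') := by
    intro m m' h
    refine eqvGen_le (s := Setoid.comap Sum.inl ((star x * x) * f)) ?_ h
    rintro u v (hr | hr)
    · exact weps hW1f ((coker_eq hy u v).1 hr)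
    · exact hr
  have mcG : ∀ {m m' : Fin n}, Mr y ((star x * x) * g) m m' →
      ((star x * x) * g).r (Sum.inl m) (Sum.inl m') := by
    intro m m' h
    refine eqvGen_le (s := Setoid.comap Sum.inl ((star x * x) * g)) ?_ h
    rintro u v (hr | hr)
    · exact weps hW1g ((coker_eq hy u v).1 hr)
    · exact hr
  -- top structure determined by cross data
  have topF : ∀ {m m' : Fin n}, (∃ j, (star x * x).r (Sum.inl m) (Sum.inr j)) →
      (((star x * x) * f).r (Sum.inl m) (Sum.inl m') ↔
        ∃ k, ((star x * x) * f).r (Sum.inl m) (Sum.inr k) ∧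
          ((star x * x) * f).r (Sum.inl m') (Sum.inr k)) := by
    intro m m' hm
    constructor
    · intro h
      obtain ⟨k, hk⟩ := wall hW1f hW2f hm
      exact ⟨k, hk, ((star x * x) * f).trans' (((star x * x) * f).symm' h) hk⟩
    · rintro ⟨k, h1, h2⟩
      exact ((star x * x) * f).trans' h1 (((star x * x) * f).symm' h2)
  have topG : ∀ {m m' : Fin n}, (∃ j, (star x * x).r (Sum.inl m) (Sum.inr j)) →
      (((star x * x) * g).r (Sum.inl m) (Sum.inl m') ↔
        ∃ k, ((star x * x) * g).r (Sum.inl m) (Sum.inr k) ∧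
          ((star x * x) * g).r (Sum.inl m') (Sum.inr k)) := by
    intro m m' hm
    constructor
    · intro h
      obtain ⟨k, hk⟩ := wall hW1g hW2g hm
      exact ⟨k, hk, ((star x * x) * g).trans' (((star x * x) * g).symm' h) hk⟩
    · rintro ⟨k, h1, h2⟩
      exact ((star x * x) * g).trans' h1 (((star x * x) * g).symm' h2)
  have crosseq : ∀ {m k : Fin n}, (∃ j, (star x * x).r (Sum.inl m) (Sum.inr j)) →
      (((star x * x) * f).r (Sum.inl m) (Sum.inr k) ↔
        ((star x * x) * g).r (Sum.inl m) (Sum.inr k)) := fun hm => hfg _ _ hm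
  have hcross : ∀ a b : Fin n,
      ((y * ((star x * x) * f)).r (Sum.inl a) (Sum.inr b) ↔
        (y * ((star x * x) * g)).r (Sum.inl a) (Sum.inr b)) := by
    intro a b
    rw [mul_tb, mul_tb]
    constructor
    · rintro ⟨m, m', h1, hM, h2⟩
      refine ⟨m, m, h1, Mr.refl _ _ m, ?_⟩
      have hm := ytb hy h1
      exact (crosseq hm).1 (((star x * x) * f).trans' (mcF hM) h2)
    · rintro ⟨m, m', h1, hM, h2⟩
      refine ⟨m, m, h1, Mr.refl _ _ m, ?_⟩
      have hm := ytb hy h1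
      exact (crosseq hm).2 (((star x * x) * g).trans' (mcG hM) h2)
  have htop : ∀ a b : Fin n,
      ((y * ((star x * x) * f)).r (Sum.inl a) (Sum.inl b) ↔
        (y * ((star x * x) * g)).r (Sum.inl a) (Sum.inl b)) := by
    intro a b
    rw [mul_tt, mul_tt]
    refine or_congr Iff.rfl ?_
    refine exists_congr fun m => exists_congr fun m' => ?_
    refine and_congr_right fun h1 => and_congr_left fun h2 => ?_
    have hm := ytb hy h1
    have hm' := ytb hy h2
    constructor
    · intro hM
      refine Mr.of_y ?_
      refine (topG hm).2 ?_
      obtain ⟨k, hk1, hk2⟩ := (topF hm).1 (mcF hM)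
      exact ⟨k, (crosseq hm).1 hk1, (crosseq hm').1 hk2⟩
    · intro hM
      refine Mr.of_y ?_
      refine (topF hm).2 ?_
      obtain ⟨k, hk1, hk2⟩ := (topG hm).1 (mcG hM)
      exact ⟨k, (crosseq hm).2 hk1, (crosseq hm').2 hk2⟩
  have hbot : ∀ a b : Fin n,
      ((y * ((star x * x) * f)).r (Sum.inr a) (Sum.inr b) ↔
        (y * ((star x * x) * g)).r (Sum.inr a) (Sum.inr b)) := by
    intro a b
    rw [mul_bb, mul_bb]
    refine or_congr ?_ ?_
    · rw [coker_eq hW2f, coker_eq hW2g]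
    · constructor
      · rintro ⟨m, m', h1, hM, h2⟩
        have hm := wcross_tb hW1f h1
        refine ⟨m, m, (crosseq hm).1 h1, Mr.refl _ _ m, (crosseq hm).1 ?_⟩
        exact ((star x * x) * f).trans' (mcF hM) h2
      · rintro ⟨m, m', h1, hM, h2⟩
        have hm := wcross_tb hW1g h1
        refine ⟨m, m, (crosseq hm).2 h1, Mr.refl _ _ m, (crosseq hm).2 ?_⟩
        exact ((star x * x) * g).trans' (mcG hM) h2
  refine Setoid.ext fun p q => ?_
  rcases p with a | a <;> rcases q with b | b
  · exact htop a b
  · exact hcross a b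
  · constructor
    · intro h
      exact (y * ((star x * x) * g)).symm' ((hcross b a).1 ((y * ((star x * x) * f)).symm' h))
    · intro h
      exact (y * ((star x * x) * f)).symm' ((hcross b a).2 ((y * ((star x * x) * g)).symm' h))
  · exact hbot a b

end PartitionMonoid


open PartitionMonoid in
/-- For a subsemigroup `S` of the partition monoid `P_n`: the map
`λ : x ↦ x* x` is a homomorphism from the right-multiplication action of `S` on
`P_n` to the right action `p · s = s* p s` of `S` on projections, its kernel is
Green's L-relation on `P_n`, and, for any L-class `L` of `P_n` and any `x ∈ L`,
the stabiliser group `S_L` (maps induced on `L` by the stabiliser of `L` in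
`S^1`) acts faithfully on the set of transverse blocks of `x* x`: two
stabiliser elements inducing the same map on the transverse blocks of `x* x`
induce the same map on `L`. -/
theorem PartitionMonoid.lambda_action (n : ℕ) (S : Subsemigroup (PartitionMonoid n)) :
    -- kernel of `λ` is Green's L-relation
    (∀ x y : PartitionMonoid n, star x * x = star y * y ↔ pL x y) ∧
    -- `λ` is a homomorphism of right actions
    (∀ x : PartitionMonoid n, ∀ s ∈ S, star (x * s) * (x * s) = star s * (star x * x) * s) ∧
    -- faithfulness on transverse blocks
    (∀ L : Set (PartitionMonoid n), (∃ x₀, L = {y | pL x₀ y}) →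
      ∀ x ∈ L, ∀ o ∈ stab S L, ∀ p ∈ stab S L,
        (∀ k l : Fin n, transversePoint x k →
          ((act1 S (star x * x) o).r (Sum.inl k) (Sum.inr l) ↔
           (act1 S (star x * x) p).r (Sum.inl k) (Sum.inr l))) →
        ∀ y ∈ L, act1 S y o = act1 S y p) := by
  refine ⟨lambda_ker, fun x s _ => lambda_hom x s, ?_⟩
  rintro L ⟨x₀, rfl⟩ x hx o ho p hp H y hy
  have hx' : pL x₀ x := hx
  have hy' : pL x₀ y := hy
  have hT : ∀ z : PartitionMonoid n, pL x₀ z → star z * z = star x * x := by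
    intro z hz
    rw [lambda_ker]
    exact pL_trans (pL_symm hz) hx'
  have key : ∀ o' ∈ stab S {y | pL x₀ y}, ∃ fo : PartitionMonoid n,
      (∀ z, pL x₀ z → act1 S z o' = z * fo) ∧
      (star (x * fo) * (x * fo) = star x * x) ∧
      ((star x * x) * fo = act1 S (star x * x) o') := by
    rintro (_ | s) ho'
    · refine ⟨star x * x, ?_, ?_, ?_⟩
      · intro z hz
        exact (y_mul_e (hT z hz)).symm
      · rw [y_mul_e (hT x hx')]
      · exact proj_idem x
    · refine ⟨(s : PartitionMonoid n), fun z _ => rfl, ?_, rfl⟩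
      have hmem : x * (s : PartitionMonoid n) ∈ {y | pL x₀ y} := by
        have h1 : act1 S x (some s) ∈ (fun y => act1 S y (some s)) '' {y | pL x₀ y} :=
          Set.mem_image_of_mem _ hx
        rwa [ho'] at h1
      exact hT _ hmem
  obtain ⟨fo, hf1, hf2, hf3⟩ := key o ho
  obtain ⟨go, hg1, hg2, hg3⟩ := key p hp
  have hfg : ∀ k l : Fin n, (∃ j, (star x * x).r (Sum.inl k) (Sum.inr j)) →
      (((star x * x) * fo).r (Sum.inl k) (Sum.inr l) ↔
        ((star x * x) * go).r (Sum.inl k) (Sum.inr l)) := by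
    intro k l hk
    rw [hf3, hg3]
    exact H k l hk
  have := core x fo go hf2 hg2 hfg y (hT y hy')
  rw [hf1 y hy', hg1 y hy', this]
end

section
/- Let G be a group, I and J finite sets, P a regular J × I matrix over G ∪ {0}, and U = M^0[G; I, J; P] the corresponding Rees 0-matrix semigroup. Let S be a subsemigroup of U and let L be the L-class of a non-zero element (i, g, j) ∈ U, i.e. L = I × G × {j}. Then every element of Stab_S(L) has the form (k, h, j) with p_{j,k} ≠ 0, and the map sending the action of (k, h, j) on L to the group element p_{j,k} h ∈ G is a well-defined injective group homomorphism from the stabiliser group S_L into G. -/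
variable {G I J : Type*}

/-- The multiplication of the Rees 0-matrix semigroup `M⁰[G; I, J; P]`:
elements are `some (i, g, j)` together with the zero `none`, and
`(i, g, j)(k, h, l) = (i, g p_{j,k} h, l)` if `p_{j,k} ≠ 0`, and `0` otherwise. -/
def rmul [Group G] (P : J → I → Option G) :
    Option (I × G × J) → Option (I × G × J) → Option (I × G × J)
  | some (i, g, j), some (k, h, l) => (P j k).map fun p => (i, g * p * h, l)
  | _, _ => none

/-- The right action of `S^1` (identity adjoined, with elements of the Rees
0-matrix semigroup as `Option (I × G × J)`) on the Rees 0-matrix semigroup. -/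
def ract1 [Group G] (P : J → I → Option G) (w : Option (I × G × J))
    (o : Option (Option (I × G × J))) : Option (I × G × J) :=
  o.elim w (rmul P w)

/-- The stabiliser of `L` in `S^1` under the right action on subsets. -/
def rstab [Group G] (P : J → I → Option G) (S : Set (Option (I × G × J)))
    (L : Set (Option (I × G × J))) : Set (Option (Option (I × G × J))) :=
  {o | (∀ s ∈ o, s ∈ S) ∧ (fun w => ract1 P w o) '' L = L}

/-- For a subsemigroup `S` of a finite regular Rees 0-matrix semigroup
`M⁰[G; I, J; P]` over a group `G`, and `L = I × G × {j}` the L-class of a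
non-zero element `(i₀, g₀, j)`: every element of `Stab_S(L)` lying in `S` has
the form `(k, h, j)` with `p_{j,k} ≠ 0`, and the assignment
`(k, h, j)|_L ↦ p_{j,k} h` is a well-defined injective group homomorphism from
the stabiliser group `S_L` into `G`. -/
theorem reesZeroMatrix_stab_embeds [Group G] [Finite I] [Finite J]
    (P : J → I → Option G)
    (hreg : (∀ j : J, ∃ i : I, P j i ≠ none) ∧ (∀ i : I, ∃ j : J, P j i ≠ none))
    (S : Set (Option (I × G × J))) (hS : ∀ a ∈ S, ∀ b ∈ S, rmul P a b ∈ S)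
    (i₀ : I) (g₀ : G) (j : J)
    (L : Set (Option (I × G × J)))
    (hL : L = {w | ∃ i' : I, ∃ g' : G, w = some (i', g', j)}) :
    -- every non-identity element of the stabiliser has the form `(k, h, j)`
    -- with `p_{j,k} ≠ 0`
    (∀ o ∈ rstab P S L, ∀ s : Option (I × G × J), o = some s →
      ∃ k : I, ∃ h : G, s = some (k, h, j) ∧ P j k ≠ none) ∧
    -- the map `ζ : S_L → G`, `(k, h, j)|_L ↦ p_{j,k} h`, is a well-defined
    -- injective group homomorphism
    ∃ ζ : {o // o ∈ rstab P S L} → G,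
      (∀ o : {o // o ∈ rstab P S L},
        (o.1 = none → ζ o = 1) ∧
        (∀ k : I, ∀ h : G, o.1 = some (some (k, h, j)) →
          ∃ pk : G, P j k = some pk ∧ ζ o = pk * h)) ∧
      (∀ o p : {o // o ∈ rstab P S L},
        ((∀ w ∈ L, ract1 P w o.1 = ract1 P w p.1) ↔ ζ o = ζ p)) ∧
      (∀ o p q : {o // o ∈ rstab P S L},
        (∀ w ∈ L, ract1 P (ract1 P w o.1) p.1 = ract1 P w q.1) → ζ q = ζ o * ζ p) := by
  subst hL
  set L : Set (Option (I × G × J)) :=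
    {w | ∃ i' : I, ∃ g' : G, w = some (i', g', j)} with hLdef
  have hshape : ∀ o ∈ rstab P S L, ∀ s : Option (I × G × J), o = some s →
      ∃ k : I, ∃ h : G, s = some (k, h, j) ∧ P j k ≠ none := by
    rintro o ⟨-, himg⟩ s rfl
    have hw : (some (i₀, g₀, j) : Option (I × G × J)) ∈ L := ⟨i₀, g₀, rfl⟩
    have hmem : ract1 P (some (i₀, g₀, j)) (some s) ∈ L := by
      rw [← himg]; exact ⟨some (i₀, g₀, j), hw, rfl⟩
    match s with
    | none =>
      obtain ⟨i', g', heq⟩ := hmem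
      simp [ract1, rmul] at heq
    | some (k, h, l) =>
      cases hP : P j k with
      | none =>
        obtain ⟨i', g', heq⟩ := hmem
        simp [ract1, rmul, hP] at heq
      | some pk =>
        obtain ⟨i', g', heq⟩ := hmem
        simp only [ract1, rmul, hP, Option.elim, Option.map_some,
          Option.some.injEq, Prod.mk.injEq] at heq
        exact ⟨k, h, by rw [heq.2.2], by simp [hP]⟩
  refine ⟨hshape, ?_⟩
  classical
  set ζ : {o // o ∈ rstab P S L} → G :=
    fun o => (((ract1 P (some (i₀, 1, j)) o.1).map (fun t => t.2.1)).getD 1) with hζ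
  have hkey : ∀ o : {o // o ∈ rstab P S L}, ∀ i' : I, ∀ g' : G,
      ract1 P (some (i', g', j)) o.1 = some (i', g' * ζ o, j) := by
    rintro ⟨o, ho⟩ i' g'
    match o with
    | none => simp [ζ, ract1]
    | some s =>
      obtain ⟨k, h, rfl, hne⟩ := hshape _ ho s rfl
      obtain ⟨pk, hP⟩ := Option.ne_none_iff_exists'.mp hne
      simp [ζ, ract1, rmul, hP, mul_assoc]
  refine ⟨ζ, ?_, ?_, ?_⟩
  · intro o
    constructor
    · intro ho; simp [ζ, ho, ract1]
    · intro k h ho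
      obtain ⟨k', h', heq, hne⟩ := hshape _ o.2 _ ho
      obtain ⟨rfl, rfl, -⟩ : k' = k ∧ h' = h ∧ True := by
        simpa [Prod.ext_iff, and_assoc] using heq.symm
      obtain ⟨pk, hP⟩ := Option.ne_none_iff_exists'.mp hne
      refine ⟨pk, hP, ?_⟩
      have := hkey o i₀ 1
      rw [ho] at this
      simp only [ract1, rmul, hP, Option.elim, Option.map_some,
        Option.some.injEq, Prod.mk.injEq, one_mul] at this
      exact this.2.1.symm
  · intro o p
    constructor
    · intro hall
      have := hall (some (i₀, 1, j)) ⟨i₀, 1, rfl⟩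
      rw [hkey o i₀ 1, hkey p i₀ 1] at this
      simpa using this
    · rintro heq w ⟨i', g', rfl⟩
      rw [hkey o, hkey p, heq]
  · intro o p q hall
    have := hall (some (i₀, 1, j)) ⟨i₀, 1, rfl⟩
    rw [hkey o i₀ 1, hkey p, hkey q i₀ 1] at this
    simpa [mul_assoc, eq_comm] using this
end
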